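/- arXiv:2004.08894 — 4 statements merged into one kernel-verified Lean document; each statement's English description precedes it below -/
import Mathlib

section
/- For n = 3, the function Φ(ρ) = ∫_{-1}^{1} |t - ρ/3| / (1 - 2tρ + ρ²)^{1/2} dt satisfies the closed form Φ(ρ) = (2/3) · ((1 + ρ²/3)^{3/2} - 1 + ρ²)/ρ² for all ρ ∈ (0,1]. -/
open Real MeasureTheory intervalIntegral Set

lemma phi_hasDeriv (ρ : ℝ) (t : ℝ) (htρ : 0 < 1 - 2*t*ρ + ρ^2) (hρ0 : 0 < ρ) :
    HasDerivAt (fun t : ℝ => Real.sqrt (1 - 2*t*ρ + ρ^2) *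
        ((1 - 2*t*ρ + ρ^2)/3 - (1 + ρ^2/3)) / (2*ρ^2))
      ((t - ρ/3) / Real.sqrt (1 - 2*t*ρ + ρ^2)) t := by
  have hu : HasDerivAt (fun t : ℝ => 1 - 2*t*ρ + ρ^2) (-(2*ρ)) t := by
    have h : HasDerivAt (fun t : ℝ => 1 - 2*ρ*t + ρ^2) (-(2*ρ)) t := by
      simpa using (((hasDerivAt_id t).const_mul (2*ρ)).const_sub 1).add_const (ρ^2)
    convert h using 1
    ext x; ring
  have hsqrt := hu.sqrt (ne_of_gt htρ)
  have h2 : HasDerivAt (fun s : ℝ => (1 - 2*s*ρ + ρ^2)/3 - (1 + ρ^2/3)) (-(2*ρ)/3) t :=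
    (hu.div_const 3).sub_const _
  have h3 := (hsqrt.mul h2).div_const (2*ρ^2)
  refine h3.congr_deriv ?_
  symm
  have hs0 : 0 < Real.sqrt (1 - 2*t*ρ + ρ^2) := Real.sqrt_pos.mpr htρ
  have hs : Real.sqrt (1 - 2*t*ρ + ρ^2) ^ 2 = 1 - 2*t*ρ + ρ^2 := Real.sq_sqrt htρ.le
  set s := Real.sqrt (1 - 2*t*ρ + ρ^2)
  field_simp
  linear_combination 2 * hs

theorem Phi_closed_form_dim3 (ρ : Real) (hρ : ρ ∈ Set.Ioc (0:Real) 1) :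
    (∫ t in (-1:Real)..1, |t - ρ/3| / (1 - 2*t*ρ + ρ^2) ^ ((1:Real)/2))
      = 2/3 * ((1 + ρ^2/3) ^ ((3:Real)/2) - 1 + ρ^2) / ρ^2 := by
  obtain ⟨hρ0, hρ1⟩ := hρ
  have hc1 : ρ/3 < 1 := by linarith
  have hcm : (-1:ℝ) ≤ ρ/3 := by linarith
  have hupos : ∀ t : ℝ, t < 1 → 0 < 1 - 2*t*ρ + ρ^2 := by
    intro t ht
    nlinarith [sq_nonneg (1-ρ), mul_pos hρ0 (sub_pos.mpr ht)]
  have hunn : ∀ t : ℝ, t ≤ 1 → 0 ≤ 1 - 2*t*ρ + ρ^2 := by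
    intro t ht
    nlinarith [sq_nonneg (1-ρ), mul_nonneg hρ0.le (sub_nonneg.mpr ht)]
  set F : ℝ → ℝ := fun t => Real.sqrt (1 - 2*t*ρ + ρ^2) *
        ((1 - 2*t*ρ + ρ^2)/3 - (1 + ρ^2/3)) / (2*ρ^2) with hF
  have hcontu : Continuous fun t : ℝ => 1 - 2*t*ρ + ρ^2 := by continuity
  have hcontF : Continuous F := by
    exact ((hcontu.sqrt.mul ((hcontu.div_const 3).sub continuous_const)).div_const _)
  -- the original integrand
  set orig : ℝ → ℝ := fun t => |t - ρ/3| / (1 - 2*t*ρ + ρ^2) ^ ((1:ℝ)/2) with horig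
  -- First piece
  have hsub1 : uIcc (-1:ℝ) (ρ/3) = Icc (-1) (ρ/3) := uIcc_of_le hcm
  have hEq1 : EqOn orig (fun t => -((t - ρ/3) / Real.sqrt (1 - 2*t*ρ + ρ^2))) (uIcc (-1) (ρ/3)) := by
    intro t ht
    rw [hsub1] at ht
    have h1 : |t - ρ/3| = -(t - ρ/3) := abs_of_nonpos (by linarith [ht.2])
    rw [horig]
    simp only
    rw [h1, Real.sqrt_eq_rpow, neg_div]
  have hcont1 : ContinuousOn (fun t : ℝ => -((t - ρ/3) / Real.sqrt (1 - 2*t*ρ + ρ^2)))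
      (uIcc (-1) (ρ/3)) := by
    apply ContinuousOn.neg
    apply ContinuousOn.div ((continuous_id.sub continuous_const).continuousOn)
      (hcontu.sqrt.continuousOn)
    intro t ht
    rw [hsub1] at ht
    exact ne_of_gt (Real.sqrt_pos.mpr (hupos t (lt_of_le_of_lt ht.2 hc1)))
  have hint1 : IntervalIntegrable (fun t : ℝ => -((t - ρ/3) / Real.sqrt (1 - 2*t*ρ + ρ^2)))
      volume (-1) (ρ/3) := hcont1.intervalIntegrable
  have hI1 : (∫ t in (-1:ℝ)..(ρ/3), orig t) = F (-1) - F (ρ/3) := by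
    rw [intervalIntegral.integral_congr hEq1]
    have := intervalIntegral.integral_eq_sub_of_hasDerivAt
      (f := fun t => -(F t))
      (f' := fun t => -((t - ρ/3) / Real.sqrt (1 - 2*t*ρ + ρ^2)))
      (a := (-1:ℝ)) (b := ρ/3)
      (fun t ht => by
        rw [hsub1] at ht
        exact (phi_hasDeriv ρ t (hupos t (lt_of_le_of_lt ht.2 hc1)) hρ0).neg)
      hint1
    rw [this]; ring
  -- Second piece
  set m : ℝ := (1+ρ^2)/(2*ρ) with hm
  have h2ρ : (0:ℝ) < 2*ρ := by linarith
  have hm1 : (1:ℝ) ≤ m := by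
    rw [hm, le_div_iff₀ h2ρ]
    nlinarith [sq_nonneg (1-ρ)]
  have hufac : ∀ t : ℝ, 1 - 2*t*ρ + ρ^2 = (2*ρ) * (m - t) := by
    intro t
    rw [hm]
    field_simp
    ring
  set g : ℝ → ℝ := fun t => ((t - ρ/3) * (Real.sqrt (2*ρ))⁻¹) * (m - t) ^ (-(1/2):ℝ) with hg
  have hgeq : ∀ t : ℝ, t ≤ 1 → (t - ρ/3) / Real.sqrt (1 - 2*t*ρ + ρ^2) = g t := by
    intro t ht
    have hmt : 0 ≤ m - t := by linarith
    rw [hg]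
    simp only
    rw [hufac t, Real.sqrt_mul h2ρ.le, Real.rpow_neg hmt, ← Real.sqrt_eq_rpow,
      div_eq_mul_inv, mul_inv, mul_assoc]
  have hintg : IntervalIntegrable g volume (ρ/3) 1 := by
    have h0 : IntervalIntegrable (fun x : ℝ => x ^ (-(1/2):ℝ)) volume (m - ρ/3) (m - 1) :=
      intervalIntegrable_rpow' (by norm_num)
    have h1 : IntervalIntegrable (fun t : ℝ => (m - t) ^ (-(1/2):ℝ)) volume (ρ/3) 1 := by
      have := h0.comp_sub_left m
      simpa using this
    exact h1.continuousOn_mul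
      (((continuous_id.sub continuous_const).mul continuous_const).continuousOn)
  have hI2g : (∫ t in (ρ/3:ℝ)..1, g t) = F 1 - F (ρ/3) := by
    apply intervalIntegral.integral_eq_sub_of_hasDeriv_right_of_le hc1.le
      hcontF.continuousOn
      (fun x hx => by
        rw [← hgeq x hx.2.le]
        exact (phi_hasDeriv ρ x (hupos x hx.2) hρ0).hasDerivWithinAt)
      hintg
  have hEq2 : EqOn orig g (uIcc (ρ/3) 1) := by
    intro t ht
    rw [uIcc_of_le hc1.le] at ht
    have h1 : |t - ρ/3| = t - ρ/3 := abs_of_nonneg (by linarith [ht.1])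
    rw [horig]
    simp only
    rw [h1, Real.sqrt_eq_rpow] at *
    rw [← hgeq t ht.2]
    rw [Real.sqrt_eq_rpow]
  have hI2 : (∫ t in (ρ/3:ℝ)..1, orig t) = F 1 - F (ρ/3) := by
    rw [intervalIntegral.integral_congr hEq2, hI2g]
  -- integrability of orig on both pieces
  have hiorig1 : IntervalIntegrable orig volume (-1) (ρ/3) :=
    hint1.congr_ae (by
      filter_upwards [ae_restrict_mem measurableSet_uIoc] with x hx
      exact (hEq1 (uIoc_subset_uIcc hx)).symm)
  have hiorig2 : IntervalIntegrable orig volume (ρ/3) 1 :=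
    hintg.congr_ae (by
      filter_upwards [ae_restrict_mem measurableSet_uIoc] with x hx
      exact (hEq2 (uIoc_subset_uIcc hx)).symm)
  have hsplit : (∫ t in (-1:ℝ)..1, orig t)
      = (∫ t in (-1:ℝ)..(ρ/3), orig t) + ∫ t in (ρ/3:ℝ)..1, orig t :=
    (intervalIntegral.integral_add_adjacent_intervals hiorig1 hiorig2).symm
  rw [show (∫ t in (-1:Real)..1, |t - ρ/3| / (1 - 2*t*ρ + ρ^2) ^ ((1:Real)/2))
      = ∫ t in (-1:Real)..1, orig t from rfl, hsplit, hI1, hI2]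
  -- now compute F values
  have hFm1 : F (-1) = (1+ρ) * ((1+ρ)^2/3 - (1 + ρ^2/3)) / (2*ρ^2) := by
    rw [hF]
    simp only
    rw [show (1 - 2*(-1)*ρ + ρ^2 : ℝ) = (1+ρ)^2 by ring, Real.sqrt_sq (by linarith)]
  have hF1 : F 1 = (1-ρ) * ((1-ρ)^2/3 - (1 + ρ^2/3)) / (2*ρ^2) := by
    rw [hF]
    simp only
    rw [show (1 - 2*1*ρ + ρ^2 : ℝ) = (1-ρ)^2 by ring, Real.sqrt_sq (by linarith)]
  have hFc : F (ρ/3) = Real.sqrt (1 + ρ^2/3) * (-(2/3) * (1 + ρ^2/3)) / (2*ρ^2) := by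
    rw [hF]
    simp only
    rw [show (1 - 2*(ρ/3)*ρ + ρ^2 : ℝ) = 1 + ρ^2/3 by ring]
    ring_nf
  have hA0 : (0:ℝ) < 1 + ρ^2/3 := by positivity
  have hA32 : (1 + ρ^2/3 : ℝ) ^ ((3:ℝ)/2) = (1 + ρ^2/3) * Real.sqrt (1 + ρ^2/3) := by
    rw [show ((3:ℝ)/2) = 1 + 1/2 by norm_num, Real.rpow_add hA0, Real.rpow_one,
      ← Real.sqrt_eq_rpow]
  rw [hFm1, hF1, hFc, hA32]
  have hρne : ρ ≠ 0 := ne_of_gt hρ0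
  field_simp
  ring
end

section
/- The function ρ ↦ (2/3) · ((1 + ρ²/3)^{3/2} - 1 + ρ²)/ρ² (extended by its limit 1 at ρ = 0) is strictly increasing on [0, 1]. -/
lemma Phi_dim3_key (ρ : ℝ) (hρ : 0 < ρ) :
    2/3 * ((1 + ρ^2/3) ^ ((3:Real)/2) - 1 + ρ^2) / ρ^2
      = 2/3 + 2/9 * (Real.sqrt (1+ρ^2/3)^2 + Real.sqrt (1+ρ^2/3) + 1)
          / (Real.sqrt (1+ρ^2/3) + 1) := by
  set s := Real.sqrt (1+ρ^2/3) with hs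
  have hx : (0:ℝ) ≤ 1 + ρ^2/3 := by positivity
  have hs2 : s^2 = 1 + ρ^2/3 := Real.sq_sqrt hx
  have hs0 : 0 ≤ s := Real.sqrt_nonneg _
  have hs1 : 1 < s := by nlinarith [sq_nonneg ρ, hρ]
  have hpow : (1 + ρ^2/3) ^ ((3:Real)/2) = s^3 := by
    rw [show ((3:Real)/2) = (1/2 : ℝ) * (3:ℕ) by norm_num,
      Real.rpow_mul hx, Real.rpow_natCast, hs, Real.sqrt_eq_rpow]
  have hρ2 : ρ^2 = 3*s^2 - 3 := by linarith
  rw [hpow, hρ2]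
  have h1 : (3*s^2 - 3 : ℝ) ≠ 0 := by nlinarith
  have h2 : (s + 1 : ℝ) ≠ 0 := by linarith
  have h3 : (s^2 - 1 : ℝ) ≠ 0 := by nlinarith
  field_simp
  ring

theorem Phi_dim3_strictMono :
    StrictMonoOn (fun ρ : Real =>
      if ρ = 0 then 1 else 2/3 * ((1 + ρ^2/3) ^ ((3:Real)/2) - 1 + ρ^2) / ρ^2)
      (Set.Icc (0:Real) 1) := by
  intro a ha b hb hab
  have hb0 : 0 < b := lt_of_le_of_lt ha.1 hab
  have hbne : b ≠ 0 := ne_of_gt hb0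
  set sb := Real.sqrt (1+b^2/3) with hsb
  have hsb2 : sb^2 = 1 + b^2/3 := Real.sq_sqrt (by positivity)
  have hsb1 : 1 < sb := by nlinarith [Real.sqrt_nonneg (1+b^2/3), hb0]
  simp only [hbne, if_false]
  rw [Phi_dim3_key b hb0]
  rcases eq_or_lt_of_le ha.1 with h0 | ha0
  · rw [← h0]
    simp only [if_pos rfl]
    have key : 3/2 < (sb^2 + sb + 1)/(sb + 1) := by
      rw [lt_div_iff₀ (by linarith)]
      nlinarith
    have : 2/9 * (sb^2 + sb + 1) / (sb + 1) = 2/9 * ((sb^2 + sb + 1)/(sb + 1)) := by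
      ring
    rw [this]
    norm_num
    linarith
  · have hane : a ≠ 0 := ne_of_gt ha0
    simp only [hane, if_false]
    rw [Phi_dim3_key a ha0]
    set sa := Real.sqrt (1+a^2/3) with hsa
    have hsa2 : sa^2 = 1 + a^2/3 := Real.sq_sqrt (by positivity)
    have hsa1 : 1 < sa := by nlinarith [Real.sqrt_nonneg (1+a^2/3), ha0]
    have hsab : sa < sb := by
      rw [hsa, hsb]
      apply Real.sqrt_lt_sqrt (by positivity)
      nlinarith
    have key : (sa^2 + sa + 1)/(sa + 1) < (sb^2 + sb + 1)/(sb + 1) := by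
      rw [div_lt_div_iff₀ (by linarith) (by linarith)]
      nlinarith [mul_pos (sub_pos.mpr hsab) (show (0:ℝ) < sa*sb + sa + sb by nlinarith)]
    have e1 : 2/9 * (sa^2 + sa + 1) / (sa + 1) = 2/9 * ((sa^2 + sa + 1)/(sa + 1)) := by
      ring
    have e2 : 2/9 * (sb^2 + sb + 1) / (sb + 1) = 2/9 * ((sb^2 + sb + 1)/(sb + 1)) := by
      ring
    rw [e1, e2]
    linarith
end

section
/- Let λ > -1/2, -1 < s < 1, and k ≥ 2 an integer. Then ∫_{-1}^{1} |x - s| (1 - x²)^{λ - 1/2} C_k^λ(x) dx = (8λ(λ+1) / (k(k-1)(k+2λ)(k+2λ+1))) · (1 - s²)^{λ + 3/2} · C_{k-2}^{λ+2}(s), where C_k^λ denotes the Gegenbauer polynomial of degree k with parameter λ. -/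
/-- Gegenbauer (ultraspherical) polynomials `C_k^l(x)`, via the standard recurrence
(equivalent to the generating relation `(1-2xz+z^2)^(-l) = ∑ C_k^l(x) z^k`). -/
noncomputable def gegenbauer : Nat -> Real -> Real -> Real
  | 0, _, _ => 1
  | 1, l, x => 2 * l * x
  | (k+2), l, x =>
      (2 * (l + (k:Real) + 1) * x * gegenbauer (k+1) l x
        - ((k:Real) + 2*l) * gegenbauer k l x) / ((k:Real) + 2)

lemma g0 (l x : Real) : gegenbauer 0 l x = 1 := rfl
lemma g1 (l x : Real) : gegenbauer 1 l x = 2 * l * x := rfl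
lemma g2 (l x : Real) : gegenbauer 2 l x = 2*l*(l+1)*x^2 - l := by
  show (2 * (l + ((0:Nat):Real) + 1) * x * gegenbauer 1 l x
        - (((0:Nat):Real) + 2*l) * gegenbauer 0 l x) / (((0:Nat):Real) + 2) = _
  rw [g1, g0]; push_cast; ring
lemma g3 (l x : Real) : gegenbauer 3 l x
    = (2*(l+2)*x*(2*l*(l+1)*x^2 - l) - (1+2*l)*(2*l*x))/3 := by
  show (2 * (l + ((1:Nat):Real) + 1) * x * gegenbauer 2 l x
        - (((1:Nat):Real) + 2*l) * gegenbauer 1 l x) / (((1:Nat):Real) + 2) = _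
  rw [g2, g1]; push_cast; ring

lemma geg_rec (k : Nat) (l x : Real) :
    ((k:Real) + 2) * gegenbauer (k+2) l x
      = 2 * (l + (k:Real) + 1) * x * gegenbauer (k+1) l x
        - ((k:Real) + 2*l) * gegenbauer k l x := by
  have h : ((k:Real) + 2) ≠ 0 := by positivity
  rw [show gegenbauer (k+2) l x
      = (2 * (l + (k:Real) + 1) * x * gegenbauer (k+1) l x
        - ((k:Real) + 2*l) * gegenbauer k l x) / ((k:Real) + 2) from rfl]
  field_simp

lemma lemB : ∀ (n : Nat) (l x : Real),
    ((n:Real) + 2) * gegenbauer (n+2) l x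
      = 2*l*(x * gegenbauer (n+1) (l+1) x - gegenbauer n (l+1) x)
  | 0, l, x => by
      norm_num
      rw [g2, g1, g0]; ring
  | 1, l, x => by
      norm_num
      rw [g3, g2, g1]; ring
  | (n+2), l, x => by
      have IH1 := lemB (n+1) l x
      have IH2 := lemB n l x
      have h0 := geg_rec (n+2) l x
      have r1 := geg_rec (n+1) (l+1) x
      have r0 := geg_rec n (l+1) x
      push_cast at IH1 IH2 h0 r1 r0 ⊢
      apply mul_left_cancel₀ (show ((n:Real)+2)*((n:Real)+3) ≠ 0 by positivity)
      linear_combination (((n:Real)+2)*((n:Real)+3)) * h0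
        + (2*(l+(n:Real)+3)*x*((n:Real)+2)) * IH1 - (((n:Real)+2*l+2)*((n:Real)+3)) * IH2
        - (2*l*x*((n:Real)+2)) * r1 + (2*l*((n:Real)+3)) * r0

lemma lemD : ∀ (n : Nat) (l x : Real),
    gegenbauer (n+2) l x
      = gegenbauer (n+2) (l+1) x - 2*x*gegenbauer (n+1) (l+1) x + gegenbauer n (l+1) x
  | 0, l, x => by
      norm_num
      rw [g2, g2, g1, g0]; ring
  | 1, l, x => by
      norm_num
      rw [g3, g3, g2, g1]; ring
  | (n+2), l, x => by
      have IH1 := lemD (n+1) l x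
      have IH2 := lemD n l x
      have h0 := geg_rec (n+2) l x
      have r2 := geg_rec (n+2) (l+1) x
      have r1 := geg_rec (n+1) (l+1) x
      have r0 := geg_rec n (l+1) x
      push_cast at IH1 IH2 h0 r2 r1 r0 ⊢
      apply mul_left_cancel₀ (show ((n:Real)+4) ≠ 0 by positivity)
      linear_combination h0 + (2*(l+(n:Real)+3)*x) * IH1 - ((n:Real)+2*l+2) * IH2
        - r2 + (2*x) * r1 - r0

lemma lemC (n : Nat) (l x : Real) :
    ((n:Real) + 1 + 2*l) * gegenbauer (n+1) l x
      = 2*l*(gegenbauer (n+1) (l+1) x - x * gegenbauer n (l+1) x) := by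
  cases n with
  | zero =>
      norm_num
      rw [g1, g1, g0]; ring
  | succ m =>
      have hB := lemB m l x
      have hD := lemD m l x
      push_cast at hB hD ⊢
      linear_combination hB + (2*l) * hD

/-- formal derivative of the Gegenbauer polynomial. -/
noncomputable def gderiv : Nat -> Real -> Real -> Real
  | 0, _, _ => 0
  | (n+1), l, x => 2 * l * gegenbauer n (l+1) x

lemma gd0 (l x : Real) : gderiv 0 l x = 0 := rfl
lemma gds (n : Nat) (l x : Real) : gderiv (n+1) l x = 2 * l * gegenbauer n (l+1) x := rfl
lemma gd1 (l x : Real) : gderiv 1 l x = 2 * l * gegenbauer 0 (l+1) x := rfl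
lemma gd2 (l x : Real) : gderiv 2 l x = 2 * l * gegenbauer 1 (l+1) x := rfl

lemma lemStar (n : Nat) (l x : Real) :
    ((n:Real)+2) * gderiv (n+2) l x
      = 2*(l+(n:Real)+1)*(gegenbauer (n+1) l x + x * gderiv (n+1) l x)
        - ((n:Real)+2*l) * gderiv n l x := by
  cases n with
  | zero =>
      norm_num
      rw [gd2, gd1, gd0, g1, g1, g0]; ring
  | succ m =>
      have hB := lemB m l x
      have hC := lemC (m+1) l x
      have hr := geg_rec m (l+1) x
      simp only [gds, gd0]
      push_cast at hB hC hr ⊢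
      linear_combination (-1) * hB + (-1) * hC + (2*l) * hr

lemma lemE (n : Nat) (l x : Real) :
    2*l*((2*l+1)*x*gegenbauer n (l+1) x - (1-x^2) * gderiv n (l+1) x)
      = ((n:Real)+1)*((n:Real)+2*l+1)*gegenbauer (n+1) l x := by
  match n with
  | 0 =>
      norm_num
      rw [gd0, g0, g1]; ring
  | 1 =>
      norm_num
      rw [gd1, g0, g1, g2]; ring
  | (m+2) =>
      have hB1 := lemB (m+1) l x
      have hB2 := lemB m (l+1) x
      have hC2 := lemC m (l+1) x
      simp only [gds]
      push_cast at hB1 hB2 hC2 ⊢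
      linear_combination (-((m:Real)+2*l+3)) * hB1 + (-(2*l*x)) * hB2 + (2*l) * hC2

lemma geg_param_zero : ∀ (n : Nat) (x : Real), gegenbauer (n+1) 0 x = 0
  | 0, x => by rw [g1]; ring
  | 1, x => by rw [g2]; ring
  | (n+2), x => by
      have h1 := geg_param_zero (n+1) x
      have h0 := geg_param_zero n x
      have hr := geg_rec (n+1) 0 x
      have h2 : ((n:Real)+1+2) ≠ 0 := by positivity
      push_cast at hr
      rw [h1, h0] at hr
      have h3 : ((n:Real)+1+2) * gegenbauer (n+3) 0 x = 0 := by linear_combination hr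
      have := (mul_eq_zero.mp h3).resolve_left h2
      simpa using this

lemma hasDerivAt_geg : ∀ (n : Nat) (l x : Real),
    HasDerivAt (fun y => gegenbauer n l y) (gderiv n l x) x
  | 0, l, x => by
      simp only [g0, gd0]
      exact hasDerivAt_const x (1:Real)
  | 1, l, x => by
      simp only [g1, gd1, g0]
      have : HasDerivAt (fun y : Real => 2*l*y) (2*l) x := by
        simpa using (hasDerivAt_id x).const_mul (2*l)
      simpa using this
  | (n+2), l, x => by
      have h1 := hasDerivAt_geg (n+1) l x
      have h0 := hasDerivAt_geg n l x
      have hx : HasDerivAt (fun y : Real => 2*(l+(n:Real)+1)*y) (2*(l+(n:Real)+1)) x := by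
        simpa using (hasDerivAt_id x).const_mul (2*(l+(n:Real)+1))
      have hprod : HasDerivAt (fun y => 2*(l+(n:Real)+1)*y * gegenbauer (n+1) l y)
          (2*(l+(n:Real)+1) * gegenbauer (n+1) l x + 2*(l+(n:Real)+1)*x * gderiv (n+1) l x) x := by
        have := hx.mul h1
        exact this
        try ring
      have hsub : HasDerivAt (fun y => 2*(l+(n:Real)+1)*y * gegenbauer (n+1) l y
          - ((n:Real) + 2*l) * gegenbauer n l y)
          (2*(l+(n:Real)+1) * gegenbauer (n+1) l x + 2*(l+(n:Real)+1)*x * gderiv (n+1) l x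
            - ((n:Real) + 2*l) * gderiv n l x) x :=
        hprod.sub (h0.const_mul _)
      have hdiv := hsub.div_const ((n:Real)+2)
      have hfun : (fun y => (2*(l+(n:Real)+1)*y * gegenbauer (n+1) l y
          - ((n:Real) + 2*l) * gegenbauer n l y) / ((n:Real)+2))
          = fun y => gegenbauer (n+2) l y := by
        funext y
        rw [show gegenbauer (n+2) l y
          = (2 * (l + (n:Real) + 1) * y * gegenbauer (n+1) l y
            - ((n:Real) + 2*l) * gegenbauer n l y) / ((n:Real) + 2) from rfl]
        try ring
      rw [hfun] at hdiv
      refine hdiv.congr_deriv (Eq.symm ?_)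
      have hstar := lemStar n l x
      have h2 : ((n:Real)+2) ≠ 0 := by positivity
      field_simp
      linear_combination hstar

lemma continuous_geg (n : Nat) (l : Real) : Continuous (fun y => gegenbauer n l y) :=
  continuous_iff_continuousAt.mpr fun x => (hasDerivAt_geg n l x).continuousAt

open MeasureTheory intervalIntegral Set

lemma measurable_rpow_const (r : Real) : Measurable (fun t : Real => t ^ r) := by
  apply measurable_of_continuousOn_compl_singleton (0:Real)
  intro t ht
  exact (Real.continuousAt_rpow_const t r (Or.inl (Set.mem_compl_singleton_iff.mp ht))).continuousWithinAt

lemma integrable_weight {r : Real} (hr : -1 < r) {φ : Real → Real} (hφ : Continuous φ) :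
    IntervalIntegrable (fun x => (1-x^2)^r * φ x) volume (-1) 1 := by
  obtain ⟨M, hM⟩ := (isCompact_Icc (a := (-1:Real)) (b := 1)).exists_bound_of_continuousOn
    hφ.continuousOn
  have hM0 : 0 ≤ M := le_trans (norm_nonneg (φ 0)) (hM 0 (by norm_num))
  set B : Real := max 1 ((2:Real)^r) with hBdef
  have hB1 : (0:Real) ≤ B := le_trans zero_le_one (le_max_left _ _)
  have hBb : ∀ t : Real, 1 ≤ t → t ≤ 2 → t^r ≤ B := by
    intro t h1 h2
    rcases le_or_gt 0 r with h | h
    · exact le_trans (Real.rpow_le_rpow (by linarith) h2 h) (le_max_right _ _)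
    · exact le_trans (Real.rpow_le_one_of_one_le_of_nonpos h1 h.le) (le_max_left _ _)
  have hmeas : ∀ a b : Real, AEStronglyMeasurable (fun x => (1-x^2)^r * φ x)
      (volume.restrict (Set.uIoc a b)) := by
    intro a b
    exact (((measurable_rpow_const r).comp
      (measurable_const.sub (measurable_id.pow_const 2))).mul hφ.measurable).aestronglyMeasurable
  have hright : IntervalIntegrable (fun x => (1-x^2)^r * φ x) volume 0 1 := by
    have hint : IntervalIntegrable (fun x => B*M*(1-x)^r) volume 0 1 := by
      have h := (intervalIntegrable_rpow' (a := 0) (b := 1) hr).comp_sub_left 1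
      norm_num at h
      exact h.symm.const_mul (B*M)
    apply hint.mono_fun' (hmeas 0 1)
    filter_upwards [ae_restrict_mem measurableSet_uIoc] with x hx
    rw [Set.uIoc_of_le (by norm_num : (0:Real) ≤ 1)] at hx
    obtain ⟨hx0, hx1⟩ := hx
    have h1x : (0:Real) ≤ 1 - x := by linarith
    have h1px : (0:Real) ≤ 1 + x := by linarith
    have hfac : (1 - x^2)^r = (1-x)^r * (1+x)^r := by
      rw [← Real.mul_rpow h1x h1px]; ring_nf
    have hb1 : (1+x)^r ≤ B := hBb _ (by linarith) (by linarith)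
    have hb2 : ‖φ x‖ ≤ M := hM x ⟨by linarith, hx1⟩
    have h1 : (0:Real) ≤ (1-x)^r := Real.rpow_nonneg h1x _
    have h2 : (0:Real) ≤ (1+x)^r := Real.rpow_nonneg h1px _
    simp only [Real.norm_eq_abs] at hb2 ⊢
    rw [abs_mul, hfac, abs_of_nonneg (by positivity)]
    calc (1-x)^r * (1+x)^r * |φ x| ≤ (1-x)^r * B * M := by
          apply mul_le_mul _ hb2 (abs_nonneg _) (by positivity)
          exact mul_le_mul_of_nonneg_left hb1 h1
      _ = B*M*(1-x)^r := by ring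
  have hleft : IntervalIntegrable (fun x => (1-x^2)^r * φ x) volume (-1) 0 := by
    have hint : IntervalIntegrable (fun x => B*M*(x - (-1))^r) volume (-1) 0 := by
      have h := ((intervalIntegrable_rpow' (a := 0) (b := 1) hr).comp_sub_right (-1)).const_mul (B*M)
      norm_num at h ⊢
      exact h
    apply hint.mono_fun' (hmeas (-1) 0)
    filter_upwards [ae_restrict_mem measurableSet_uIoc] with x hx
    rw [Set.uIoc_of_le (by norm_num : (-1:Real) ≤ 0)] at hx
    obtain ⟨hx0, hx1⟩ := hx
    have h1x : (0:Real) ≤ 1 - x := by linarith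
    have h1px : (0:Real) ≤ 1 + x := by linarith
    have hfac : (1 - x^2)^r = (1-x)^r * (1+x)^r := by
      rw [← Real.mul_rpow h1x h1px]; ring_nf
    have hb1 : (1-x)^r ≤ B := hBb _ (by linarith) (by linarith)
    have hb2 : ‖φ x‖ ≤ M := hM x ⟨hx0.le, by linarith⟩
    have h1 : (0:Real) ≤ (1-x)^r := Real.rpow_nonneg h1x _
    have h2 : (0:Real) ≤ (1+x)^r := Real.rpow_nonneg h1px _
    simp only [Real.norm_eq_abs] at hb2 ⊢
    rw [abs_mul, hfac, abs_of_nonneg (by positivity)]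
    have hx1e : (x - (-1))^r = (1+x)^r := by ring_nf
    rw [hx1e]
    calc (1-x)^r * (1+x)^r * |φ x| ≤ B * (1+x)^r * M := by
          apply mul_le_mul _ hb2 (abs_nonneg _) (by positivity)
          exact mul_le_mul_of_nonneg_right hb1 h2
      _ = B*M*(1+x)^r := by ring
  exact hleft.trans hright

lemma hasDerivAt_weight (n : Nat) {l : Real} (hl : l ≠ 0) {x : Real} (hx2 : 0 < 1 - x^2) :
    HasDerivAt (fun y => (1-y^2)^(l+1/2) * gegenbauer n (l+1) y)
      (-(((n:Real)+1)*((n:Real)+2*l+1)/(2*l)) * ((1-x^2)^(l-1/2) * gegenbauer (n+1) l x)) x := by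
  have hbase : HasDerivAt (fun y : Real => 1 - y^2) (-(2*x)) x := by
    simpa using ((hasDerivAt_pow 2 x).const_sub 1)
  have hrpow : HasDerivAt (fun y : Real => (1-y^2)^(l+1/2))
      ((l+1/2) * (1-x^2)^(l+1/2-1) * (-(2*x))) x := by
    have h := (Real.hasDerivAt_rpow_const (x := 1-x^2) (p := l+1/2) (Or.inl hx2.ne')).comp x hbase
    simpa [Function.comp_def, mul_assoc] using h
  have hprod := hrpow.mul (hasDerivAt_geg n (l+1) x)
  refine hprod.congr_deriv (Eq.symm ?_)
  have e1 : l+1/2-1 = l-1/2 := by ring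
  have e2 : (1-x^2)^(l+1/2) = (1-x^2)^(l-1/2) * (1-x^2) := by
    rw [show l+1/2 = (l-1/2)+1 by ring, Real.rpow_add hx2, Real.rpow_one]
  rw [e1, e2]
  have key := lemE n l x
  have h2l : (2*l) ≠ 0 := by simpa using hl
  set A := (1-x^2)^(l-1/2) with hA
  field_simp
  linear_combination A * key

set_option maxHeartbeats 1000000 in
theorem gegenbauer_abs_integral (l s : Real) (hl : -1/2 < l) (hs : s ∈ Set.Ioo (-1:Real) 1)
    (k : Nat) (hk : 2 ≤ k) :
    (∫ x in (-1:Real)..1, |x - s| * (1 - x^2) ^ (l - 1/2) * gegenbauer k l x)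
      = 8*l*(l+1) / ((k:Real) * ((k:Real)-1) * ((k:Real)+2*l) * ((k:Real)+2*l+1))
          * (1 - s^2) ^ (l + 3/2) * gegenbauer (k-2) (l+2) s := by
  obtain ⟨hs1, hs2⟩ := hs
  rcases eq_or_ne l 0 with rfl | hl0
  · have hz : ∀ x : Real, gegenbauer k 0 x = 0 := by
      intro x
      obtain ⟨m, rfl⟩ : ∃ m, k = m + 1 := ⟨k-1, by omega⟩
      exact geg_param_zero m x
    simp [hz]
  obtain ⟨m, rfl⟩ : ∃ m, k = m + 2 := ⟨k-2, by omega⟩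
  simp only [Nat.add_sub_cancel]
  have hm0 : (0:Real) ≤ (m:Real) := Nat.cast_nonneg m
  have hl1 : (0:Real) < l + 1 := by linarith
  have hl1' : l + 1 ≠ 0 := ne_of_gt hl1
  have hr : (-1:Real) < l - 1/2 := by linarith
  have hq : (0:Real) < l + 1/2 := by linarith
  have hq3 : (0:Real) < l + 3/2 := by linarith
  have hm23 : (0:Real) < (m:Real)+2*l+3 := by linarith
  have hm22 : (0:Real) < (m:Real)+2*l+2 := by linarith
  set c1 : Real := ((m:Real)+1)*((m:Real)+2*l+3)/(2*(l+1)) with hc1def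
  set c2 : Real := ((m:Real)+2)*((m:Real)+2*l+2)/(2*l) with hc2def
  have hc1 : c1 ≠ 0 := div_ne_zero (mul_pos (by linarith) hm23).ne' (by linarith)
  have hc2 : c2 ≠ 0 := div_ne_zero (mul_pos (by linarith) hm22).ne'
    (mul_ne_zero two_ne_zero hl0)
  set F : Real → Real := fun y => (1-y^2)^(l+3/2) * gegenbauer m (l+2) y with hFdef
  set G : Real → Real := fun y => (1-y^2)^(l+1/2) * gegenbauer (m+1) (l+1) y with hGdef
  set g : Real → Real := fun y => (1-y^2)^(l-1/2) * gegenbauer (m+2) l y with hgdef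
  -- derivatives
  have hFderiv : ∀ x ∈ Set.Ioo (-1:Real) 1, HasDerivAt F (-c1 * G x) x := by
    intro x hx
    have hx2 : 0 < 1 - x^2 := by nlinarith [hx.1, hx.2]
    have h := hasDerivAt_weight (l := l+1) m hl1' hx2
    have e1 : l+1+1/2 = l+3/2 := by ring
    have e2 : l+1-1/2 = l+1/2 := by ring
    have e3 : l+1+1 = l+2 := by ring
    rw [e1, e2, e3] at h
    convert h using 1
    simp only [hGdef, hc1def]
    ring
  have hGderiv : ∀ x ∈ Set.Ioo (-1:Real) 1, HasDerivAt G (-c2 * g x) x := by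
    intro x hx
    have hx2 : 0 < 1 - x^2 := by nlinarith [hx.1, hx.2]
    have h := hasDerivAt_weight (m+1) hl0 hx2
    convert h using 1
    simp only [hgdef, hc2def]
    push_cast
    ring
  -- continuity
  have hFc : ContinuousOn F (Set.Icc (-1:Real) 1) := by
    rw [hFdef]
    exact ((continuous_const.sub (continuous_pow 2)).continuousOn.rpow_const
      (fun x _ => Or.inr (by linarith))).mul (continuous_geg m (l+2)).continuousOn
  have hGc : ContinuousOn G (Set.Icc (-1:Real) 1) := by
    rw [hGdef]
    exact ((continuous_const.sub (continuous_pow 2)).continuousOn.rpow_const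
      (fun x _ => Or.inr (by linarith))).mul (continuous_geg (m+1) (l+1)).continuousOn
  -- boundary values
  have hF1 : F 1 = 0 := by simp only [hFdef]; norm_num [Real.zero_rpow hq3.ne']
  have hFm1 : F (-1) = 0 := by simp only [hFdef]; norm_num [Real.zero_rpow hq3.ne']
  have hG1 : G 1 = 0 := by simp only [hGdef]; norm_num [Real.zero_rpow hq.ne']
  have hGm1 : G (-1) = 0 := by simp only [hGdef]; norm_num [Real.zero_rpow hq.ne']
  -- integrability
  have hint_abs : IntervalIntegrable
      (fun x => |x - s| * (1-x^2)^(l-1/2) * gegenbauer (m+2) l x) volume (-1) 1 := by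
    have h := integrable_weight hr (φ := fun x => |x - s| * gegenbauer (m+2) l x)
      (((continuous_id.sub continuous_const).abs).mul (continuous_geg (m+2) l))
    have e : (fun x => |x - s| * (1-x^2)^(l-1/2) * gegenbauer (m+2) l x)
        = fun x => (1-x^2)^(l-1/2) * (|x-s| * gegenbauer (m+2) l x) := funext fun x => by ring
    rw [e]; exact h
  have hint_lin : IntervalIntegrable (fun x => (x-s) * g x) volume (-1) 1 := by
    have h := integrable_weight hr (φ := fun x => (x - s) * gegenbauer (m+2) l x)
      ((continuous_id.sub continuous_const).mul (continuous_geg (m+2) l))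
    have e : (fun x => (x-s) * g x)
        = fun x => (1-x^2)^(l-1/2) * ((x-s) * gegenbauer (m+2) l x) := by
      simp only [hgdef]; exact funext fun x => by ring
    rw [e]; exact h
  have hmem_s : s ∈ Set.uIcc (-1:Real) 1 := by
    rw [Set.uIcc_of_le (by norm_num : (-1:Real) ≤ 1)]; exact ⟨hs1.le, hs2.le⟩
  have hmem_1 : (1:Real) ∈ Set.uIcc (-1:Real) 1 := by
    rw [Set.uIcc_of_le (by norm_num : (-1:Real) ≤ 1)]; exact ⟨by norm_num, le_refl 1⟩
  have hmem_m1 : (-1:Real) ∈ Set.uIcc (-1:Real) 1 := by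
    rw [Set.uIcc_of_le (by norm_num : (-1:Real) ≤ 1)]; exact ⟨le_refl _, by norm_num⟩
  have hsub1 : Set.uIcc s (1:Real) ⊆ Set.uIcc (-1:Real) 1 := Set.uIcc_subset_uIcc hmem_s hmem_1
  have hsub2 : Set.uIcc (-1:Real) s ⊆ Set.uIcc (-1:Real) 1 := Set.uIcc_subset_uIcc hmem_m1 hmem_s
  -- FTC on subintervals
  have main : ∀ a b : Real, -1 ≤ a → b ≤ 1 → a ≤ b →
      (∫ x in a..b, (x-s) * g x)
        = (-(1/c2)*((b-s)*G b) - (1/(c1*c2))*F b)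
          - (-(1/c2)*((a-s)*G a) - (1/(c1*c2))*F a) := by
    intro a b ha hb hab
    apply intervalIntegral.integral_eq_sub_of_hasDeriv_right_of_le
      (f := fun y => -(1/c2)*((y-s)*G y) - (1/(c1*c2))*F y)
      (f' := fun x => (x-s) * g x) hab
    · apply ContinuousOn.sub
      · exact continuousOn_const.mul (((continuousOn_id.sub continuousOn_const).mul
          ((hGc.mono (Set.Icc_subset_Icc ha hb)))))
      · exact continuousOn_const.mul (hFc.mono (Set.Icc_subset_Icc ha hb))
    · intro x hx
      have hx' : x ∈ Set.Ioo (-1:Real) 1 := ⟨lt_of_le_of_lt ha hx.1, lt_of_lt_of_le hx.2 hb⟩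
      have hG' := hGderiv x hx'
      have hF' := hFderiv x hx'
      have h1 : HasDerivAt (fun y => (y-s) * G y) (1 * G x + (x-s) * (-c2 * g x)) x :=
        ((hasDerivAt_id x).sub_const s).mul hG'
      have h2 := (h1.const_mul (-(1/c2))).sub (hF'.const_mul (1/(c1*c2)))
      have h3 : HasDerivAt (fun y => -(1/c2)*((y-s)*G y) - (1/(c1*c2))*F y) ((x-s) * g x) x := by
        refine h2.congr_deriv (Eq.symm ?_)
        field_simp
        ring
      exact h3.hasDerivWithinAt
    · exact hint_lin.mono_set (Set.uIcc_subset_uIcc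
        (by rw [Set.uIcc_of_le (by norm_num : (-1:Real) ≤ 1)]; exact ⟨ha, by linarith⟩)
        (by rw [Set.uIcc_of_le (by norm_num : (-1:Real) ≤ 1)]; exact ⟨by linarith, hb⟩))
  -- the two pieces
  have hA : (∫ x in (-1:Real)..s, |x-s| * (1-x^2)^(l-1/2) * gegenbauer (m+2) l x)
      = F s/(c1*c2) := by
    have e : Set.EqOn (fun x => |x-s| * (1-x^2)^(l-1/2) * gegenbauer (m+2) l x)
        (fun x => -((x-s) * g x)) (Set.uIcc (-1:Real) s) := by
      intro x hx
      rw [Set.uIcc_of_le (by linarith : (-1:Real) ≤ s)] at hx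
      have habs : |x - s| = -(x-s) := abs_of_nonpos (by linarith [hx.2])
      simp only [hgdef, habs]
      ring
    rw [intervalIntegral.integral_congr e, intervalIntegral.integral_neg,
      main (-1) s (le_refl _) hs2.le (by linarith), hGm1, hFm1]
    field_simp
    try ring
  have hB : (∫ x in s..(1:Real), |x-s| * (1-x^2)^(l-1/2) * gegenbauer (m+2) l x)
      = F s/(c1*c2) := by
    have e : Set.EqOn (fun x => |x-s| * (1-x^2)^(l-1/2) * gegenbauer (m+2) l x)
        (fun x => (x-s) * g x) (Set.uIcc s (1:Real)) := by
      intro x hx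
      rw [Set.uIcc_of_le (by linarith : s ≤ (1:Real))] at hx
      have habs : |x - s| = x-s := abs_of_nonneg (by linarith [hx.1])
      simp only [hgdef, habs]
      ring
    rw [intervalIntegral.integral_congr e,
      main s 1 (by linarith) (le_refl _) hs2.le, hG1, hF1]
    field_simp
    try ring
  have hsplit := intervalIntegral.integral_add_adjacent_intervals
    (hint_abs.mono_set hsub2) (hint_abs.mono_set hsub1)
  rw [← hsplit, hA, hB]
  have hFs : F s = (1-s^2)^(l+3/2) * gegenbauer m (l+2) s := by rw [hFdef]
  push_cast
  have hd1 : ((m:Real)+2) ≠ 0 := by positivity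
  have hd2 : ((m:Real)+2)-1 ≠ 0 := by
    have e : ((m:Real)+2)-1 = (m:Real)+1 := by ring
    rw [e]; positivity
  have hd3 : ((m:Real)+2)+2*l ≠ 0 := ne_of_gt (by linarith)
  have hd4 : ((m:Real)+2)+2*l+1 ≠ 0 := ne_of_gt (by linarith)
  have h2l : (2*l) ≠ 0 := mul_ne_zero two_ne_zero hl0
  rw [hFs, hc1def, hc2def]
  field_simp [hd2]
  ring
end

section
/- For n = 3 and t ∈ (0, 1], the inequality reverses: ₂F₁(1, 3/2; 2; t(1 - t/9)/(1 + t/3)) < (1 + t/3)·1 / ((1 - t/3)(1 - t/9)·1), i.e., with n = 3 the right-hand side of the hypergeometric inequality from the n ≥ 4 case strictly exceeds the left-hand side. -/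
set_option maxHeartbeats 1000000


/-- Pochhammer symbol (rising factorial). -/
noncomputable def poch (a : Real) (k : Nat) : Real := (ascPochhammer Real k).eval a

/-- Gauss hypergeometric function 2F1. -/
noncomputable def hyperg (a b c z : Real) : Real :=
  ∑' k : Nat, poch a k * poch b k / (poch c k * (Nat.factorial k)) * z ^ k

lemma poch_zero (a : ℝ) : poch a 0 = 1 := by simp [poch]

lemma poch_succ (a : ℝ) (k : ℕ) : poch a (k + 1) = poch a k * (a + k) := by
  simp [poch, ascPochhammer_succ_right]

lemma poch_pos {a : ℝ} (ha : 0 < a) (k : ℕ) : 0 < poch a k := by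
  induction k with
  | zero => simp [poch_zero]
  | succ n ih =>
    rw [poch_succ]
    have : (0:ℝ) < a + n := by positivity
    exact mul_pos ih this

/-- The coefficient of `z^k` in the series for `₂F₁(1, 3/2; 2; z)`. -/
noncomputable def cc (k : ℕ) : ℝ := poch 1 k * poch (3/2) k / (poch 2 k * (Nat.factorial k))

lemma cc_zero : cc 0 = 1 := by simp [cc, poch_zero]

lemma cc_succ (k : ℕ) : cc (k + 1) = cc k * ((2 * k + 3) / (2 * k + 4)) := by
  have h1 := poch_pos (show (0:ℝ) < 1 by norm_num) k
  have h2 := poch_pos (show (0:ℝ) < 2 by norm_num) k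
  have h3 : (0:ℝ) < (Nat.factorial k : ℝ) := by positivity
  rw [cc, cc, poch_succ, poch_succ, poch_succ, Nat.factorial_succ]
  push_cast
  field_simp
  ring

lemma cc_pos (k : ℕ) : 0 < cc k := by
  have h1 := poch_pos (show (0:ℝ) < 1 by norm_num) k
  have h2 := poch_pos (show (0:ℝ) < (3/2:ℝ) by norm_num) k
  have h3 := poch_pos (show (0:ℝ) < 2 by norm_num) k
  have h4 : (0:ℝ) < (Nat.factorial k : ℝ) := by positivity
  exact div_pos (mul_pos h1 h2) (mul_pos h3 h4)

lemma cc_succ_le (k : ℕ) : cc (k + 1) ≤ cc k := by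
  rw [cc_succ]
  have h : ((2:ℝ) * k + 3) / (2 * k + 4) ≤ 1 := by
    rw [div_le_one (by positivity)]
    linarith
  nlinarith [cc_pos k]

lemma cc_le_one (k : ℕ) : cc k ≤ 1 := by
  induction k with
  | zero => simp [cc_zero]
  | succ n ih => exact le_trans (cc_succ_le n) ih

lemma cc_one : cc 1 = 3 / 4 := by
  have h := cc_succ 0; norm_num [cc_zero] at h; exact h

lemma cc_two : cc 2 = 5 / 8 := by
  have h := cc_succ 1; norm_num [cc_one] at h; exact h

lemma cc_three : cc 3 = 35 / 64 := by
  have h := cc_succ 2; norm_num [cc_two] at h; linarith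

lemma cc_four : cc 4 = 63 / 128 := by
  have h := cc_succ 3; norm_num [cc_three] at h; linarith

lemma cc_five : cc 5 = 231 / 512 := by
  have h := cc_succ 4; norm_num [cc_four] at h; linarith

lemma cc_le_five (j : ℕ) : cc (j + 5) ≤ 231 / 512 := by
  induction j with
  | zero => simp [cc_five]
  | succ n ih => calc cc (n + 1 + 5) = cc ((n + 5) + 1) := by ring_nf
                   _ ≤ cc (n + 5) := cc_succ_le _
                   _ ≤ 231 / 512 := ih

lemma summable_cc {z : ℝ} (hz0 : 0 ≤ z) (hz1 : z < 1) :
    Summable (fun k : ℕ => cc k * z ^ k) := by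
  apply Summable.of_nonneg_of_le (fun k => mul_nonneg (cc_pos k).le (pow_nonneg hz0 k))
    (fun k => ?_) (summable_geometric_of_lt_one hz0 hz1)
  have := cc_le_one k
  have hzk : (0:ℝ) ≤ z ^ k := by positivity
  nlinarith

theorem hyperg_inequality_reversed_dim3 (t : Real) (ht : t ∈ Set.Ioc (0:Real) 1) :
    hyperg 1 (3/2) 2 (t * (1 - t/9) / (1 + t/3))
      < (1 + t/3) / ((1 - t/3) * (1 - t/9)) := by
  obtain ⟨ht0, ht1⟩ := ht
  set z : ℝ := t * (1 - t/9) / (1 + t/3) with hz_def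
  have h3t : (0:ℝ) < 1 + t/3 := by linarith
  have hz0 : 0 < z := by
    apply div_pos _ h3t
    nlinarith
  have hz1 : z < 1 := by
    rw [hz_def, div_lt_one h3t]
    nlinarith
  have h1z : 0 < 1 - z := by linarith
  -- the hypergeometric function equals the series with coefficients cc
  have hhyp : hyperg 1 (3/2) 2 z = ∑' k : ℕ, cc k * z ^ k := by
    unfold hyperg cc
    rfl
  have hsum : Summable (fun k : ℕ => cc k * z ^ k) := summable_cc hz0.le hz1
  -- split off first 5 terms
  have hsplit :
      (∑' k : ℕ, cc k * z ^ k)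
        = (∑ i ∈ Finset.range 5, cc i * z ^ i) + ∑' j : ℕ, cc (j + 5) * z ^ (j + 5) :=
    (Summable.sum_add_tsum_nat_add 5 hsum).symm
  -- bound the tail by a geometric series
  have htail : (∑' j : ℕ, cc (j + 5) * z ^ (j + 5)) ≤ (231/512) * z ^ 5 * (1 - z)⁻¹ := by
    have hgs : Summable (fun j : ℕ => (231/512) * z ^ 5 * z ^ j) :=
      (summable_geometric_of_lt_one hz0.le hz1).mul_left _
    have hle : ∀ j : ℕ, cc (j + 5) * z ^ (j + 5) ≤ (231/512) * z ^ 5 * z ^ j := by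
      intro j
      have h1 := cc_le_five j
      have h2 : z ^ (j + 5) = z ^ 5 * z ^ j := by rw [pow_add]; ring
      rw [h2]
      have hzz : (0:ℝ) ≤ z ^ 5 * z ^ j := by positivity
      nlinarith [cc_pos (j + 5)]
    calc (∑' j : ℕ, cc (j + 5) * z ^ (j + 5))
        ≤ ∑' j : ℕ, (231/512) * z ^ 5 * z ^ j :=
          Summable.tsum_le_tsum hle ((summable_nat_add_iff 5).2 hsum) hgs
      _ = (231/512) * z ^ 5 * ∑' j : ℕ, z ^ j := tsum_mul_left
      _ = (231/512) * z ^ 5 * (1 - z)⁻¹ := by rw [tsum_geometric_of_lt_one hz0.le hz1]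
  -- the head sum, explicitly
  have hhead : (∑ i ∈ Finset.range 5, cc i * z ^ i)
      = 1 + (3/4) * z + (5/8) * z^2 + (35/64) * z^3 + (63/128) * z^4 := by
    simp [Finset.sum_range_succ, cc_zero, cc_one, cc_two, cc_three, cc_four]
  -- reduce to a concrete inequality in t
  have hkey : 1 + (3/4) * z + (5/8) * z^2 + (35/64) * z^3 + (63/128) * z^4
      + (231/512) * z ^ 5 * (1 - z)⁻¹ < (1 + t/3) / ((1 - t/3) * (1 - t/9)) := by
    rw [← sub_pos]
    have h3t' : (1:ℝ) + t/3 ≠ 0 := by linarith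
    have h13 : (1:ℝ) - t/3 ≠ 0 := by intro h; nlinarith
    have h19 : (1:ℝ) - t/9 ≠ 0 := by intro h; nlinarith
    have h1z' : (1:ℝ) - z ≠ 0 := by linarith
    have hident : (1 + t/3) / ((1 - t/3) * (1 - t/9))
        - (1 + (3/4) * z + (5/8) * z^2 + (35/64) * z^3 + (63/128) * z^4
          + (231/512) * z ^ 5 * (1 - z)⁻¹)
        = (t * ((204073344) + (238085568)*t + (52435512)*t^2 + (-37555164)*t^3
            + (-18797265)*t^4 + (-237258882)*t^5 + (71816706)*t^6 + (16363134)*t^7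
            + (-7056720)*t^8 + (1093338)*t^9 + (-87642)*t^10 + (3654)*t^11 + (-63)*t^12))
          / (512 * (9 + 3*t)^5 * (3 - t)^3 * (9 - t)) := by
      have hm3 : (3:ℝ) - t ≠ 0 := by intro h; linarith
      have hp3 : (3:ℝ) + t ≠ 0 := by intro h; linarith
      have hm9 : (9:ℝ) - t ≠ 0 := by intro h; linarith
      have hinv : (1 - z)⁻¹ = 3 * (3 + t) / (3 - t) ^ 2 := by
        rw [hz_def, show (1:ℝ) - t * (1 - t/9) / (1 + t/3) = (3 - t) ^ 2 / (3 * (3 + t)) from by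
          field_simp; ring, inv_div]
      rw [hinv, hz_def]
      field_simp
      ring
    rw [hident]
    apply div_pos
    · have hp : ∀ m n : ℕ, m ≤ n → t ^ n ≤ t ^ m :=
        fun m n h => pow_le_pow_of_le_one ht0.le ht1 h
      have e1 : t ^ 1 = t := pow_one t
      have q2 : (0:ℝ) ≤ t^2 := by positivity
      have q6 : (0:ℝ) ≤ t^6 := by positivity
      have q7 : (0:ℝ) ≤ t^7 := by positivity
      have q9 : (0:ℝ) ≤ t^9 := by positivity
      have q11 : (0:ℝ) ≤ t^11 := by positivity
      have p3 := hp 1 3 (by norm_num)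
      have p4 := hp 1 4 (by norm_num)
      have p5 := hp 1 5 (by norm_num)
      have p8 := hp 1 8 (by norm_num)
      have p10 := hp 1 10 (by norm_num)
      have p12 := hp 1 12 (by norm_num)
      rw [e1] at p3 p4 p5 p8 p10 p12
      have hQ : (0:ℝ) < (204073344) + (238085568)*t + (52435512)*t^2 + (-37555164)*t^3
            + (-18797265)*t^4 + (-237258882)*t^5 + (71816706)*t^6 + (16363134)*t^7
            + (-7056720)*t^8 + (1093338)*t^9 + (-87642)*t^10 + (3654)*t^11 + (-63)*t^12 := by
        linarith
      exact mul_pos ht0 hQ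
    · have : (0:ℝ) < 9 + 3*t := by linarith
      have : (0:ℝ) < 3 - t := by linarith
      have : (0:ℝ) < 9 - t := by linarith
      positivity
  calc hyperg 1 (3/2) 2 z
      = (∑ i ∈ Finset.range 5, cc i * z ^ i) + ∑' j : ℕ, cc (j + 5) * z ^ (j + 5) := by
        rw [hhyp, hsplit]
    _ ≤ (∑ i ∈ Finset.range 5, cc i * z ^ i) + (231/512) * z ^ 5 * (1 - z)⁻¹ := by
        linarith
    _ = 1 + (3/4) * z + (5/8) * z^2 + (35/64) * z^3 + (63/128) * z^4
        + (231/512) * z ^ 5 * (1 - z)⁻¹ := by rw [hhead]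
    _ < (1 + t/3) / ((1 - t/3) * (1 - t/9)) := hkey
end
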